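/- For all Ω, λ ∈ ℝ, ξ ∈ ℝ² and E ∈ ℂ, the characteristic determinant of the AB-stacked bulk Hamiltonian factorizes as det(H₊(ξ) − E·I₄) = (|ξ|² − (E−Ω)²)(|ξ|² − (E+Ω)²) − λ²(E² − Ω²). -/

import Mathlib

open Complex Matrix

/-- The Fourier-domain bulk Hamiltonian of gated twisted bilayer graphene with
AB stacking (valley `η = 1`): gating potential `Ω`, interlayer coupling `lam`,
momentum `ξ = (ξ₁, ξ₂)` identified with the complex number `ξ₁ + i ξ₂`. -/
noncomputable def Hplus (Ω lam : ℝ) (ξ : ℝ × ℝ) : Matrix (Fin 4) (Fin 4) ℂ :=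
  !![(Ω : ℂ), (ξ.1 : ℂ) - (ξ.2 : ℂ) * I, 0, 0;
     (ξ.1 : ℂ) + (ξ.2 : ℂ) * I, (Ω : ℂ), (lam : ℂ), 0;
     0, (lam : ℂ), -(Ω : ℂ), (ξ.1 : ℂ) - (ξ.2 : ℂ) * I;
     0, 0, (ξ.1 : ℂ) + (ξ.2 : ℂ) * I, -(Ω : ℂ)]

/-- The characteristic determinant of the AB-stacked bulk Hamiltonian factorizes as
`det(H₊(ξ) − E·I₄) = (|ξ|² − (E−Ω)²)(|ξ|² − (E+Ω)²) − λ²(E² − Ω²)`. -/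
theorem charDet_Hplus_factorized (Ω lam : ℝ) (ξ : ℝ × ℝ) (E : ℂ) :
    (Hplus Ω lam ξ - E • (1 : Matrix (Fin 4) (Fin 4) ℂ)).det =
      (((ξ.1 ^ 2 + ξ.2 ^ 2 : ℝ) : ℂ) - (E - (Ω : ℂ)) ^ 2) *
        (((ξ.1 ^ 2 + ξ.2 ^ 2 : ℝ) : ℂ) - (E + (Ω : ℂ)) ^ 2) -
      (lam : ℂ) ^ 2 * (E ^ 2 - (Ω : ℂ) ^ 2) := by
  have h : (Hplus Ω lam ξ - E • (1 : Matrix (Fin 4) (Fin 4) ℂ)) =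
      !![(Ω : ℂ) - E, (ξ.1 : ℂ) - (ξ.2 : ℂ) * I, 0, 0;
         (ξ.1 : ℂ) + (ξ.2 : ℂ) * I, (Ω : ℂ) - E, (lam : ℂ), 0;
         0, (lam : ℂ), -(Ω : ℂ) - E, (ξ.1 : ℂ) - (ξ.2 : ℂ) * I;
         0, 0, (ξ.1 : ℂ) + (ξ.2 : ℂ) * I, -(Ω : ℂ) - E] := by
    ext i j
    fin_cases i <;> fin_cases j <;>
      simp [Hplus, Matrix.smul_apply, Matrix.one_apply]
  rw [h]
  simp [Matrix.det_succ_row_zero, Fin.sum_univ_succ, Fin.succAbove]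
  have hI : (I : ℂ) ^ 2 = -1 := Complex.I_sq
  ring_nf
  rw [show (I:ℂ)^4 = 1 from by rw [show (4:ℕ)=2*2 from rfl, pow_mul, hI]; norm_num]
  rw [hI]
  ring
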